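/- arXiv:1901.09285 — 5 statements merged into one kernel-verified Lean document; each statement's English description precedes it below -/
import Mathlib

section
/- Fix k ≥ 1 and θ ∈ (0,1). The function P(μ) = (k + μ θ^{k+μ})/(k + μ) is strictly convex on [0,∞). -/
/-- P(μ) = (k + μ θ^{k+μ})/(k + μ) is strictly convex on [0, ∞)
for integer k ≥ 1 and θ ∈ (0,1). -/
theorem stmt_4 (k : ℕ) (hk : 1 ≤ k) (θ : ℝ) (hθ0 : 0 < θ) (hθ1 : θ < 1) :
    StrictConvexOn ℝ (Set.Ici 0)
      (fun μ : ℝ => ((k : ℝ) + μ * θ ^ ((k : ℝ) + μ)) / ((k : ℝ) + μ)) := by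
  set K : ℝ := (k : ℝ) with hK
  have hK1 : (1 : ℝ) ≤ K := by rw [hK]; exact_mod_cast hk
  have hK0 : 0 < K := lt_of_lt_of_le one_pos hK1
  set c : ℝ := Real.log θ with hc
  have hclt : c < 0 := Real.log_neg hθ0 hθ1
  have hcne : c ≠ 0 := ne_of_lt hclt
  -- rewrite rpow as exp
  have hfun : (fun μ : ℝ => (K + μ * θ ^ (K + μ)) / (K + μ)) =
      (fun μ : ℝ => (K + μ * Real.exp (c * (K + μ))) / (K + μ)) := by
    funext μ
    rw [Real.rpow_def_of_pos hθ0]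
  rw [hfun]
  set g : ℝ → ℝ := fun μ : ℝ => (K + μ * Real.exp (c * (K + μ))) / (K + μ) with hg
  -- first derivative
  set g₁ : ℝ → ℝ := fun μ : ℝ =>
    (K * (Real.exp (c * (K + μ)) - 1) + c * μ * Real.exp (c * (K + μ)) * (K + μ)) / (K + μ) ^ 2
    with hg₁
  -- second derivative
  set g₂ : ℝ → ℝ := fun μ : ℝ =>
    (c ^ 2 * Real.exp (c * (K + μ)) * (K + μ) ^ 3 +
      K * (2 - Real.exp (c * (K + μ)) * (c ^ 2 * (K + μ) ^ 2 - 2 * c * (K + μ) + 2))) /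
      (K + μ) ^ 3 with hg₂
  have hE : ∀ μ : ℝ, HasDerivAt (fun μ : ℝ => Real.exp (c * (K + μ)))
      (c * Real.exp (c * (K + μ))) μ := by
    intro μ
    have h1 : HasDerivAt (fun μ : ℝ => c * (K + μ)) c μ := by
      simpa using ((hasDerivAt_id μ).const_add K).const_mul c
    simpa [mul_comm] using h1.exp
  have hDne : ∀ μ : ℝ, -K < μ → (K + μ) ≠ 0 := fun μ hμ => by linarith
  have hd1 : ∀ μ : ℝ, -K < μ → HasDerivAt g (g₁ μ) μ := by
    intro μ hμ
    have hN : HasDerivAt (fun μ : ℝ => K + μ * Real.exp (c * (K + μ)))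
        (Real.exp (c * (K + μ)) + μ * (c * Real.exp (c * (K + μ)))) μ := by
      simpa using (((hasDerivAt_id μ).mul (hE μ)).const_add K)
    have hD : HasDerivAt (fun μ : ℝ => K + μ) 1 μ := by
      simpa using (hasDerivAt_id μ).const_add K
    have := hN.div hD (hDne μ hμ)
    convert this using 1
    · rfl
    · rfl
    · rfl
    rw [hg₁]
    field_simp
    ring
  have hd2 : ∀ μ : ℝ, -K < μ → HasDerivAt g₁ (g₂ μ) μ := by
    intro μ hμ
    have hA : HasDerivAt (fun μ : ℝ =>
        K * (Real.exp (c * (K + μ)) - 1) + c * μ * Real.exp (c * (K + μ)) * (K + μ))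
        (K * (c * Real.exp (c * (K + μ))) +
          ((c * Real.exp (c * (K + μ)) + c * μ * (c * Real.exp (c * (K + μ)))) * (K + μ) +
            c * μ * Real.exp (c * (K + μ)) * 1)) μ := by
      have h1 : HasDerivAt (fun μ : ℝ => K * (Real.exp (c * (K + μ)) - 1))
          (K * (c * Real.exp (c * (K + μ)))) μ := (((hE μ).sub_const 1).const_mul K)
      have h2 : HasDerivAt (fun μ : ℝ => c * μ) c μ := by
        simpa using (hasDerivAt_id μ).const_mul c
      have h3 : HasDerivAt (fun μ : ℝ => c * μ * Real.exp (c * (K + μ)))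
          (c * Real.exp (c * (K + μ)) + c * μ * (c * Real.exp (c * (K + μ)))) μ :=
        h2.mul (hE μ)
      have h4 : HasDerivAt (fun μ : ℝ => K + μ) 1 μ := by
        simpa using (hasDerivAt_id μ).const_add K
      exact h1.add (h3.mul h4)
    have hB : HasDerivAt (fun μ : ℝ => (K + μ) ^ 2) (2 * (K + μ)) μ := by
      have h4 : HasDerivAt (fun μ : ℝ => K + μ) 1 μ := by
        simpa using (hasDerivAt_id μ).const_add K
      simpa using h4.fun_pow 2
    have hB2 : ((K + μ) ^ 2) ≠ 0 := pow_ne_zero 2 (hDne μ hμ)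
    have hne : (K + μ) ≠ 0 := hDne μ hμ
    have := hA.div hB hB2
    convert this using 1
    · rfl
    · rfl
    · rfl
    rw [hg₂]
    field_simp
    ring
  apply strictConvexOn_of_deriv2_pos (convex_Ici 0)
  · -- continuity
    apply ContinuousOn.div
    · fun_prop
    · fun_prop
    · intro x hx
      have hx0 : (0:ℝ) ≤ x := hx
      intro h; linarith
  · intro μ hμ
    rw [interior_Ici] at hμ
    have hμ0 : (0:ℝ) < μ := hμ
    have hμK : -K < μ := by linarith
    have hD0 : 0 < K + μ := by linarith
    -- deriv g = g₁ near μ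
    have hev : deriv g =ᶠ[nhds μ] g₁ := by
      filter_upwards [IsOpen.mem_nhds isOpen_Ioi hμK] with x hx
      exact (hd1 x hx).deriv
    have hderiv2 : deriv^[2] g μ = g₂ μ := by
      have : deriv (deriv g) μ = deriv g₁ μ := hev.deriv_eq
      simp only [Function.iterate_succ, Function.iterate_zero, Function.comp_apply, id_eq]
      rw [this, (hd2 μ hμK).deriv]
    rw [hderiv2, hg₂]
    apply div_pos _ (by positivity)
    have hEpos : 0 < Real.exp (c * (K + μ)) := Real.exp_pos _
    have hquad : 2 - Real.exp (c * (K + μ)) * (c ^ 2 * (K + μ) ^ 2 - 2 * c * (K + μ) + 2) ≥ 0 := by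
      set t : ℝ := -(c * (K + μ)) with ht
      have ht0 : 0 < t := by
        rw [ht]
        have : c * (K + μ) < 0 := mul_neg_of_neg_of_pos hclt hD0
        linarith
      have hq := Real.quadratic_le_exp_of_nonneg ht0.le
      have hexp : Real.exp (c * (K + μ)) = (Real.exp t)⁻¹ := by
        rw [ht, Real.exp_neg, inv_inv]
      have htpos : 0 < Real.exp t := Real.exp_pos t
      have hterm : c ^ 2 * (K + μ) ^ 2 - 2 * c * (K + μ) + 2 = t ^ 2 + 2 * t + 2 := by
        rw [ht]; ring
      rw [hexp, hterm]
      rw [ge_iff_le, sub_nonneg, inv_mul_le_iff₀ htpos]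
      nlinarith
    have h1 : 0 < c ^ 2 * Real.exp (c * (K + μ)) * (K + μ) ^ 3 := by positivity
    nlinarith
end

section
/- Fix k ≥ 1, θ ∈ (0,1), constants α₁, α₂ > 0, and a convex, strictly increasing, differentiable penalty function f: [0,∞) → [0,∞) with f(0) = 0. Then the expected disutility E(μ) = α₁ f(μ) + α₂ c · (k + μ θ^{k+μ})/(k + μ), where c ∈ (0,1] is a constant infection probability, is strictly convex in μ on [0,∞) and attains a unique minimizer μ* ≥ 0. -/
open Real Set

noncomputable def Gfun (k L : ℝ) : ℝ → ℝ :=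
  fun μ => (k + μ * Real.exp (L * (k + μ))) / (k + μ)

lemma G_deriv1 (k L : ℝ) {μ : ℝ} (hμ : -k < μ) :
    HasDerivAt (Gfun k L)
      ((Real.exp (L * (k + μ)) * (k + L * μ * (k + μ)) - k) / (k + μ) ^ 2) μ := by
  have hx : k + μ ≠ 0 := by linarith
  have he : HasDerivAt (fun μ : ℝ => Real.exp (L * (k + μ))) (L * Real.exp (L * (k + μ))) μ := by
    have h1 : HasDerivAt (fun μ : ℝ => L * (k + μ)) L μ := by
      simpa using ((hasDerivAt_id μ).const_add k).const_mul L
    simpa [mul_comm, Function.comp_def] using (Real.hasDerivAt_exp (L * (k + μ))).comp μ h1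
  have hN : HasDerivAt (fun μ : ℝ => k + μ * Real.exp (L * (k + μ)))
      (1 * Real.exp (L * (k + μ)) + μ * (L * Real.exp (L * (k + μ)))) μ :=
    (((hasDerivAt_id μ).mul he).const_add k)
  have hD : HasDerivAt (fun μ : ℝ => k + μ) 1 μ := by
    simpa using (hasDerivAt_id μ).const_add k
  have := hN.div hD hx
  refine this.congr_deriv ?_
  ring

lemma G_deriv2 (k L : ℝ) {μ : ℝ} (hμ : -k < μ) :
    HasDerivAt (fun μ => (Real.exp (L * (k + μ)) * (k + L * μ * (k + μ)) - k) / (k + μ) ^ 2)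
      ((2 * k * (1 - Real.exp (L * (k + μ)) + L * (k + μ) * Real.exp (L * (k + μ)))
        + L ^ 2 * μ * (k + μ) ^ 2 * Real.exp (L * (k + μ))) / (k + μ) ^ 3) μ := by
  have hx : k + μ ≠ 0 := by linarith
  have he : HasDerivAt (fun μ : ℝ => Real.exp (L * (k + μ))) (L * Real.exp (L * (k + μ))) μ := by
    have h1 : HasDerivAt (fun μ : ℝ => L * (k + μ)) L μ := by
      simpa using ((hasDerivAt_id μ).const_add k).const_mul L
    simpa [mul_comm, Function.comp_def] using (Real.hasDerivAt_exp (L * (k + μ))).comp μ h1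
  have hP : HasDerivAt (fun μ : ℝ => k + L * μ * (k + μ)) (L * (k + μ) + L * μ) μ := by
    have h2 : HasDerivAt (fun μ : ℝ => L * μ) L μ := by simpa using (hasDerivAt_id μ).const_mul L
    have h3 : HasDerivAt (fun μ : ℝ => k + μ) 1 μ := by simpa using (hasDerivAt_id μ).const_add k
    have := (h2.mul h3).const_add (k : ℝ)
    refine this.congr_deriv ?_
    ring
  have hA : HasDerivAt (fun μ : ℝ => Real.exp (L * (k + μ)) * (k + L * μ * (k + μ)) - k)
      (L * Real.exp (L * (k + μ)) * (k + L * μ * (k + μ))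
        + Real.exp (L * (k + μ)) * (L * (k + μ) + L * μ)) μ :=
    (he.mul hP).sub_const k
  have hB : HasDerivAt (fun μ : ℝ => (k + μ) ^ 2) (2 * (k + μ)) μ := by
    have h3 : HasDerivAt (fun μ : ℝ => k + μ) 1 μ := by simpa using (hasDerivAt_id μ).const_add k
    simpa [Pi.pow_def] using h3.pow 2
  have hB0 : (k + μ) ^ 2 ≠ 0 := pow_ne_zero _ hx
  have := hA.div hB hB0
  refine this.congr_deriv ?_
  field_simp
  ring

lemma Gfun_strictConvexOn (k L : ℝ) (hk : 1 ≤ k) (hL : L < 0) :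
    StrictConvexOn ℝ (Set.Ici 0) (Gfun k L) := by
  apply strictConvexOn_of_deriv2_pos (convex_Ici 0)
  · intro μ hμ
    have hμ' : -k < μ := by simp at hμ; linarith
    exact (G_deriv1 k L hμ').continuousAt.continuousWithinAt
  · intro x hx
    rw [interior_Ici] at hx
    have hx0 : (0:ℝ) < x := hx
    have hx' : -k < x := by linarith
    have hmem : Set.Ioi (-k) ∈ nhds x := Ioi_mem_nhds hx'
    have hev : deriv (Gfun k L) =ᶠ[nhds x]
        (fun μ => (Real.exp (L * (k + μ)) * (k + L * μ * (k + μ)) - k) / (k + μ) ^ 2) :=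
      Filter.eventuallyEq_of_mem hmem fun y hy => (G_deriv1 k L hy).deriv
    show 0 < deriv^[2] (Gfun k L) x
    have : deriv^[2] (Gfun k L) x = deriv (deriv (Gfun k L)) x := rfl
    rw [this, hev.deriv_eq, (G_deriv2 k L hx').deriv]
    -- positivity
    have hkx : (0:ℝ) < k + x := by linarith
    set u : ℝ := -(L * (k + x)) with hu
    have hu0 : 0 < u := by
      have : L * (k + x) < 0 := mul_neg_of_neg_of_pos hL hkx
      simp [hu]; linarith
    have hlt : u + 1 < Real.exp u := Real.add_one_lt_exp hu0.ne'
    have hexp : Real.exp (L * (k + x)) = Real.exp (-u) := by rw [hu]; ring_nf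
    have h2 : (u + 1) * Real.exp (-u) < 1 := by
      have := mul_lt_mul_of_pos_right hlt (Real.exp_pos (-u))
      rwa [← Real.exp_add, add_neg_cancel, Real.exp_zero] at this
    have hterm1 : 0 < 1 - Real.exp (L * (k + x)) + L * (k + x) * Real.exp (L * (k + x)) := by
      rw [hexp]
      have hLkx : L * (k + x) = -u := by rw [hu]; ring
      nlinarith [Real.exp_pos (-u)]
    have hterm2 : 0 < L ^ 2 * x * (k + x) ^ 2 * Real.exp (L * (k + x)) := by
      have hL2 : 0 < L ^ 2 := pow_pos (by linarith : 0 < -L) 2 |>.trans_eq (by ring)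
      positivity
    apply div_pos
    · nlinarith
    · positivity

/-- The expected disutility E(μ) = α₁ f(μ) + α₂ c (k + μ θ^{k+μ})/(k + μ), with f
convex, strictly increasing, differentiable, f(0) = 0 and nonnegative on [0,∞),
is strictly convex on [0,∞) and attains a unique minimizer there. -/
theorem stmt_5 (k : ℕ) (hk : 1 ≤ k) (θ : ℝ) (hθ0 : 0 < θ) (hθ1 : θ < 1)
    (α₁ α₂ c : ℝ) (hα₁ : 0 < α₁) (hα₂ : 0 < α₂) (hc0 : 0 < c) (hc1 : c ≤ 1)
    (f : ℝ → ℝ) (hf_conv : ConvexOn ℝ (Set.Ici 0) f)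
    (hf_mono : StrictMonoOn f (Set.Ici 0))
    (hf_diff : ∀ μ : ℝ, 0 ≤ μ → DifferentiableAt ℝ f μ)
    (hf0 : f 0 = 0) (hf_nonneg : ∀ μ : ℝ, 0 ≤ μ → 0 ≤ f μ)
    (E : ℝ → ℝ)
    (hE : ∀ μ : ℝ, E μ =
      α₁ * f μ + α₂ * c * (((k : ℝ) + μ * θ ^ ((k : ℝ) + μ)) / ((k : ℝ) + μ))) :
    StrictConvexOn ℝ (Set.Ici 0) E ∧
      ∃! μstar : ℝ, μstar ∈ Set.Ici (0 : ℝ) ∧ IsMinOn E (Set.Ici 0) μstar := by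
  set L : ℝ := Real.log θ with hLdef
  have hL : L < 0 := Real.log_neg hθ0 hθ1
  have hk1 : (1:ℝ) ≤ (k:ℝ) := by exact_mod_cast hk
  have hEeq : E = fun μ => α₁ * f μ + α₂ * c * Gfun (k:ℝ) L μ := by
    funext μ
    rw [hE, Gfun]
    rw [Real.rpow_def_of_pos hθ0]
  -- strict convexity
  have hG := Gfun_strictConvexOn (k:ℝ) L hk1 hL
  have hGc : StrictConvexOn ℝ (Set.Ici 0) (fun μ => α₂ * c * Gfun (k:ℝ) L μ) := by
    refine ⟨hG.1, fun x hx y hy hxy a b ha hb hab => ?_⟩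
    have h1 := hG.2 hx hy hxy ha hb hab
    have hpos : 0 < α₂ * c := mul_pos hα₂ hc0
    simp only [smul_eq_mul] at *
    nlinarith
  have hfc : ConvexOn ℝ (Set.Ici 0) (fun μ => α₁ * f μ) := by
    have := hf_conv.smul hα₁.le
    simpa [smul_eq_mul] using this
  have hEconv : StrictConvexOn ℝ (Set.Ici 0) E := by
    rw [hEeq]
    exact hfc.add_strictConvexOn hGc
  refine ⟨hEconv, ?_⟩
  -- continuity
  have hEcont : ContinuousOn E (Set.Ici 0) := by
    rw [hEeq]
    intro μ hμ
    have hμ0 : (0:ℝ) ≤ μ := hμ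
    have h1 : ContinuousAt (fun μ => α₁ * f μ) μ :=
      continuousAt_const.mul (hf_diff μ hμ0).continuousAt
    have h2 : ContinuousAt (fun μ => α₂ * c * Gfun (k:ℝ) L μ) μ :=
      continuousAt_const.mul (G_deriv1 (k:ℝ) L (by linarith : -(k:ℝ) < μ)).continuousAt
    exact (h1.add h2).continuousWithinAt
  -- lower bounds
  have hf1 : 0 < f 1 := by
    have := hf_mono (le_refl (0:ℝ)) (by norm_num : (1:ℝ) ∈ Set.Ici (0:ℝ)) one_pos
    rwa [hf0] at this
  have hflin : ∀ μ : ℝ, 1 ≤ μ → f 1 * μ ≤ f μ := by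
    intro μ hμ
    have hμ0 : (0:ℝ) < μ := by linarith
    have ht0 : 0 ≤ 1 - 1/μ := by
      have : 1/μ ≤ 1 := by rw [div_le_one hμ0]; linarith
      linarith
    have ht1 : 0 ≤ 1/μ := by positivity
    have hcomb := hf_conv.2 (le_refl (0:ℝ)) (le_of_lt hμ0 : (0:ℝ) ≤ μ) ht0 ht1 (by ring)
    have hpt : (1 - 1/μ) • (0:ℝ) + (1/μ) • μ = 1 := by
      simp only [smul_eq_mul, mul_zero, zero_add]
      field_simp
    rw [hpt] at hcomb
    simp only [smul_eq_mul, hf0, mul_zero, zero_add] at hcomb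
    calc f 1 * μ ≤ (1/μ * f μ) * μ := by
          apply mul_le_mul_of_nonneg_right hcomb hμ0.le
      _ = f μ := by field_simp
  have hGnonneg : ∀ μ : ℝ, 0 ≤ μ → 0 ≤ Gfun (k:ℝ) L μ := by
    intro μ hμ
    apply div_nonneg
    · have := Real.exp_pos (L * ((k:ℝ) + μ))
      nlinarith
    · linarith
  have hE0 : E 0 = α₂ * c := by
    rw [hEeq]
    simp only [hf0, mul_zero, zero_add]
    have : Gfun (k:ℝ) L 0 = 1 := by
      rw [Gfun]
      simp
      omega
    rw [this, mul_one]
  have hElb : ∀ μ : ℝ, 1 ≤ μ → α₁ * (f 1 * μ) ≤ E μ := by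
    intro μ hμ
    rw [hEeq]
    have h1 : α₁ * (f 1 * μ) ≤ α₁ * f μ :=
      mul_le_mul_of_nonneg_left (hflin μ hμ) hα₁.le
    have h2 : 0 ≤ α₂ * c * Gfun (k:ℝ) L μ := by
      have := hGnonneg μ (by linarith)
      positivity
    simp only
    linarith
  set M : ℝ := max 1 ((α₂ * c + 1) / (α₁ * f 1)) with hM
  have hM1 : 1 ≤ M := le_max_left _ _
  have hMbig : α₂ * c + 1 ≤ α₁ * f 1 * M := by
    have h1 : (α₂ * c + 1) / (α₁ * f 1) ≤ M := le_max_right _ _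
    have h2 : 0 < α₁ * f 1 := mul_pos hα₁ hf1
    calc α₂ * c + 1 = (α₂ * c + 1) / (α₁ * f 1) * (α₁ * f 1) := by field_simp
      _ ≤ M * (α₁ * f 1) := mul_le_mul_of_nonneg_right h1 h2.le
      _ = α₁ * f 1 * M := by ring
  -- min on compact interval
  obtain ⟨μ₀, hμ₀mem, hμ₀min⟩ := (isCompact_Icc : IsCompact (Set.Icc (0:ℝ) M)).exists_isMinOn
    ⟨0, by constructor <;> linarith⟩ (hEcont.mono Set.Icc_subset_Ici_self)
  have hμ₀Ici : μ₀ ∈ Set.Ici (0:ℝ) := hμ₀mem.1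
  have hglobal : IsMinOn E (Set.Ici 0) μ₀ := by
    rw [isMinOn_iff]
    intro x hx
    rcases le_or_gt x M with hxM | hxM
    · exact isMinOn_iff.mp hμ₀min x ⟨hx, hxM⟩
    · have h1 : E μ₀ ≤ E 0 := isMinOn_iff.mp hμ₀min 0 ⟨le_refl 0, by linarith⟩
      have h2 : α₁ * (f 1 * x) ≤ E x := hElb x (by linarith)
      have h3 : α₁ * f 1 * M ≤ α₁ * f 1 * x := by
        apply mul_le_mul_of_nonneg_left hxM.le (mul_pos hα₁ hf1).le
      rw [hE0] at h1
      nlinarith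
  exact ⟨μ₀, ⟨hμ₀Ici, hglobal⟩,
    fun y hy => hEconv.eq_of_isMinOn hy.2 hglobal hy.1 hμ₀Ici⟩
end

section
/- Let f: [0,∞) → [0,∞) be strongly convex and C¹ with f'(0) = 0, and let k ≥ 1, θ ∈ (0,1), α₁, α₂ > 0, c ∈ (0,1]. Define h(μ) = α₁ f'(μ) + α₂ c · d/dμ[(k + μ θ^{k+μ})/(k + μ)]. Then h has a unique zero μ̃ ∈ (0,∞) (i.e., the first-order condition for the individual's best response has a unique solution). -/
open Real Set

/-- auxiliary exponential term -/
noncomputable def s6E (L K ν : ℝ) : ℝ := Real.exp (L * (K + ν))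

/-- explicit first derivative of P -/
noncomputable def s6q (L K ν : ℝ) : ℝ :=
  (K * (s6E L K ν - 1) + L * s6E L K ν * ν * (K + ν)) / (K + ν) ^ 2

/-- explicit second derivative of P -/
noncomputable def s6r (L K ν : ℝ) : ℝ :=
  (L ^ 2 * s6E L K ν * ν * (K + ν) ^ 2 +
    2 * K * (L * s6E L K ν * (K + ν) - s6E L K ν + 1)) / (K + ν) ^ 3

lemma s6E_pos (L K ν : ℝ) : 0 < s6E L K ν := Real.exp_pos _

lemma s6E_hasDeriv (L K ν : ℝ) :
    HasDerivAt (fun ν => s6E L K ν) (L * s6E L K ν) ν := by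
  have h1 : HasDerivAt (fun ν : ℝ => L * (K + ν)) L ν := by
    simpa using ((hasDerivAt_id ν).const_add K).const_mul L
  simpa [s6E, mul_comm] using h1.exp

lemma s6P_hasDeriv (L K ν : ℝ) (hν : K + ν ≠ 0) :
    HasDerivAt (fun ν => (K + ν * s6E L K ν) / (K + ν)) (s6q L K ν) ν := by
  have hE := s6E_hasDeriv L K ν
  have hN : HasDerivAt (fun ν => K + ν * s6E L K ν)
      (1 * s6E L K ν + ν * (L * s6E L K ν)) ν :=
    ((hasDerivAt_id ν).mul hE).const_add K
  have hD : HasDerivAt (fun ν : ℝ => K + ν) 1 ν := by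
    simpa using (hasDerivAt_id ν).const_add K
  have hres := hN.div hD hν
  refine hres.congr_deriv ?_
  unfold s6q
  field_simp
  ring

lemma s6q_hasDeriv (L K ν : ℝ) (hν : K + ν ≠ 0) :
    HasDerivAt (fun ν => s6q L K ν) (s6r L K ν) ν := by
  have hE := s6E_hasDeriv L K ν
  have hD : HasDerivAt (fun ν : ℝ => K + ν) 1 ν := by
    simpa using (hasDerivAt_id ν).const_add K
  -- numerator A
  have h1 : HasDerivAt (fun ν => s6E L K ν - 1) (L * s6E L K ν) ν := hE.sub_const 1
  have h2 : HasDerivAt (fun ν => K * (s6E L K ν - 1)) (K * (L * s6E L K ν)) ν :=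
    h1.const_mul K
  have h3 : HasDerivAt (fun ν => L * s6E L K ν) (L * (L * s6E L K ν)) ν := hE.const_mul L
  have h4 : HasDerivAt (fun ν => L * s6E L K ν * ν)
      (L * (L * s6E L K ν) * ν + L * s6E L K ν * 1) ν := h3.mul (hasDerivAt_id ν)
  have h5 : HasDerivAt (fun ν => L * s6E L K ν * ν * (K + ν))
      ((L * (L * s6E L K ν) * ν + L * s6E L K ν * 1) * (K + ν)
        + L * s6E L K ν * ν * 1) ν := h4.mul hD
  have hA : HasDerivAt (fun ν => K * (s6E L K ν - 1) + L * s6E L K ν * ν * (K + ν))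
      (K * (L * s6E L K ν) + ((L * (L * s6E L K ν) * ν + L * s6E L K ν * 1) * (K + ν)
        + L * s6E L K ν * ν * 1)) ν := h2.add h5
  have hB : HasDerivAt (fun ν : ℝ => (K + ν) ^ 2) (2 * (K + ν)) ν := by
    have := hD.fun_pow 2
    simpa using this
  have hBne : (K + ν) ^ 2 ≠ 0 := pow_ne_zero _ hν
  have hres := hA.div hB hBne
  unfold s6q
  refine hres.congr_deriv ?_
  unfold s6r
  field_simp
  ring


lemma s6r_nonneg (L K ν : ℝ) (hL : L < 0) (hK : 0 < K) (hν : 0 ≤ ν) :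
    0 ≤ s6r L K ν := by
  have hs : 0 < K + ν := by linarith
  have hE := s6E_pos L K ν
  have key : s6E L K ν * (1 + -(L * (K + ν))) ≤ 1 := by
    have h1 : -(L * (K + ν)) + 1 ≤ Real.exp (-(L * (K + ν))) := Real.add_one_le_exp _
    have h2 : s6E L K ν * (1 + -(L * (K + ν))) ≤ s6E L K ν * Real.exp (-(L * (K + ν))) := by
      apply mul_le_mul_of_nonneg_left (by linarith) hE.le
    have h3 : s6E L K ν * Real.exp (-(L * (K + ν))) = 1 := by
      rw [s6E, ← Real.exp_add]; simp
    linarith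
  have h4 : 0 ≤ L * s6E L K ν * (K + ν) - s6E L K ν + 1 := by nlinarith
  apply div_nonneg _ (by positivity)
  have h5 : 0 ≤ L ^ 2 * s6E L K ν * ν * (K + ν) ^ 2 := by positivity
  nlinarith

lemma s6q_zero_neg (L K : ℝ) (hL : L < 0) (hK : 0 < K) : s6q L K 0 < 0 := by
  have hE1 : s6E L K 0 < 1 := by
    rw [s6E]
    apply Real.exp_lt_one_iff.mpr
    have : L * (K + 0) < 0 := mul_neg_of_neg_of_pos hL (by linarith)
    linarith
  have hE := s6E_pos L K 0
  unfold s6q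
  apply div_neg_of_neg_of_pos _ (by positivity)
  nlinarith

lemma s6q_mono (L K : ℝ) (hL : L < 0) (hK : 0 < K) :
    MonotoneOn (fun ν => s6q L K ν) (Set.Ici 0) := by
  apply monotoneOn_of_deriv_nonneg (convex_Ici 0)
  · intro ν hν
    have hs : K + ν ≠ 0 := by have : (0:ℝ) ≤ ν := hν; positivity
    exact ((s6q_hasDeriv L K ν hs).differentiableAt.continuousAt).continuousWithinAt
  · intro ν hν
    rw [interior_Ici] at hν
    have hs : K + ν ≠ 0 := by have : (0:ℝ) < ν := hν; positivity
    exact (s6q_hasDeriv L K ν hs).differentiableAt.differentiableWithinAt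
  · intro ν hν
    rw [interior_Ici] at hν
    have hs : K + ν ≠ 0 := by have : (0:ℝ) < ν := hν; positivity
    rw [(s6q_hasDeriv L K ν hs).deriv]
    exact s6r_nonneg L K ν hL hK hν.le

/-- For f strongly convex and C¹ with f'(0) = 0, the first-order condition
h(μ) = α₁ f'(μ) + α₂ c ∂_μ[(k + μ θ^{k+μ})/(k + μ)] = 0 has a unique solution in (0,∞). -/
theorem stmt_6 (k : ℕ) (hk : 1 ≤ k) (θ : ℝ) (hθ0 : 0 < θ) (hθ1 : θ < 1)
    (α₁ α₂ c : ℝ) (hα₁ : 0 < α₁) (hα₂ : 0 < α₂) (hc0 : 0 < c) (hc1 : c ≤ 1)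
    (f f' : ℝ → ℝ) (m : ℝ) (hm : 0 < m)
    (hf_strong : StrongConvexOn (Set.Ici 0) m f)
    (hf' : ∀ μ : ℝ, 0 ≤ μ → HasDerivAt f (f' μ) μ)
    (hf'_cont : ContinuousOn f' (Set.Ici 0))
    (hf'0 : f' 0 = 0)
    (h : ℝ → ℝ)
    (hh : ∀ μ : ℝ, h μ = α₁ * f' μ +
      α₂ * c * deriv (fun ν : ℝ => ((k : ℝ) + ν * θ ^ ((k : ℝ) + ν)) / ((k : ℝ) + ν)) μ) :
    ∃! μtilde : ℝ, μtilde ∈ Set.Ioi (0 : ℝ) ∧ h μtilde = 0 := by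
  set K : ℝ := (k : ℝ) with hKdef
  have hK1 : (1:ℝ) ≤ K := by rw [hKdef]; exact_mod_cast hk
  have hK0 : (0:ℝ) < K := by linarith
  set L := Real.log θ with hLdef
  have hL : L < 0 := Real.log_neg hθ0 hθ1
  -- rewrite h in terms of s6q
  have hfun : (fun ν : ℝ => ((k : ℝ) + ν * θ ^ ((k : ℝ) + ν)) / ((k : ℝ) + ν))
      = fun ν => (K + ν * s6E L K ν) / (K + ν) := by
    funext ν
    rw [Real.rpow_def_of_pos hθ0]
    rfl
  have hh' : ∀ μ : ℝ, 0 ≤ μ → h μ = α₁ * f' μ + α₂ * c * s6q L K μ := by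
    intro μ hμ
    have hs : K + μ ≠ 0 := by positivity
    rw [hh μ, hfun, (s6P_hasDeriv L K μ hs).deriv]
  -- derivative gap from strong convexity
  have hgap : ∀ x y : ℝ, 0 ≤ x → x < y → m * (y - x) ≤ f' y - f' x := by
    intro x y hx hxy
    have hy : (0:ℝ) ≤ y := by linarith
    have hg : ConvexOn ℝ (Set.Ici 0) (fun t : ℝ => f t - m / 2 * t ^ 2) := by
      have := strongConvexOn_iff_convex.mp hf_strong
      simpa [Real.norm_eq_abs, sq_abs] using this
    have hpow : ∀ t : ℝ, HasDerivAt (fun t : ℝ => m / 2 * t ^ 2) (m * t) t := by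
      intro t
      have := (hasDerivAt_pow 2 t).const_mul (m / 2)
      refine this.congr_deriv ?_
      simp
      ring
    have hdx : HasDerivAt (fun t : ℝ => f t - m / 2 * t ^ 2) (f' x - m * x) x :=
      (hf' x hx).sub (hpow x)
    have hdy : HasDerivAt (fun t : ℝ => f t - m / 2 * t ^ 2) (f' y - m * y) y :=
      (hf' y hy).sub (hpow y)
    have h1 := hg.le_slope_of_hasDerivAt (Set.mem_Ici.mpr hx) (Set.mem_Ici.mpr hy) hxy hdx
    have h2 := hg.slope_le_of_hasDerivAt (Set.mem_Ici.mpr hx) (Set.mem_Ici.mpr hy) hxy hdy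
    have := le_trans h1 h2
    linarith
  have hqmono := s6q_mono L K hL hK0
  -- strict monotonicity of h on [0, ∞)
  have hmono : StrictMonoOn h (Set.Ici 0) := by
    intro x hx y hy hxy
    have hx0 : (0:ℝ) ≤ x := hx
    have hy0 : (0:ℝ) ≤ y := hy
    have hq : s6q L K x ≤ s6q L K y := hqmono hx hy hxy.le
    have hg := hgap x y hx0 hxy
    rw [hh' x hx0, hh' y hy0]
    have h1 : α₁ * f' x + α₁ * (m * (y - x)) ≤ α₁ * f' y := by nlinarith
    have h2 : α₂ * c * s6q L K x ≤ α₂ * c * s6q L K y := by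
      apply mul_le_mul_of_nonneg_left hq (by positivity)
    have h3 : 0 < α₁ * (m * (y - x)) := by
      apply mul_pos hα₁ (mul_pos hm (by linarith))
    linarith
  have hq0 : s6q L K 0 < 0 := s6q_zero_neg L K hL hK0
  have hh0 : h 0 < 0 := by
    rw [hh' 0 le_rfl, hf'0]
    have : α₂ * c * s6q L K 0 < 0 :=
      mul_neg_of_pos_of_neg (mul_pos hα₂ hc0) hq0
    linarith
  -- a point where h is positive
  set M : ℝ := (1 - α₂ * c * s6q L K 0) / (α₁ * m) with hMdef
  have hM0 : 0 < M := by
    apply div_pos _ (mul_pos hα₁ hm)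
    nlinarith [mul_pos hα₂ hc0]
  have hhM : 1 ≤ h M := by
    rw [hh' M hM0.le]
    have hfM : m * M ≤ f' M := by
      have := hgap 0 M le_rfl hM0
      rw [hf'0] at this
      linarith
    have hqM : s6q L K 0 ≤ s6q L K M := hqmono Set.self_mem_Ici hM0.le hM0.le
    have h1 : α₁ * (m * M) ≤ α₁ * f' M := by nlinarith
    have h2 : α₂ * c * s6q L K 0 ≤ α₂ * c * s6q L K M :=
      mul_le_mul_of_nonneg_left hqM (by positivity)
    have h3 : α₁ * (m * M) = 1 - α₂ * c * s6q L K 0 := by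
      rw [hMdef]
      field_simp
    linarith
  -- continuity of h on [0, ∞)
  have hcont : ContinuousOn h (Set.Ici 0) := by
    have hqc : ContinuousOn (fun ν => s6q L K ν) (Set.Ici 0) := by
      intro ν hν
      have hs : K + ν ≠ 0 := by have : (0:ℝ) ≤ ν := hν; positivity
      exact ((s6q_hasDeriv L K ν hs).differentiableAt.continuousAt).continuousWithinAt
    have : ContinuousOn (fun μ => α₁ * f' μ + α₂ * c * s6q L K μ) (Set.Ici 0) :=
      (continuousOn_const.mul hf'_cont).add (continuousOn_const.mul hqc)
    exact this.congr fun μ hμ => hh' μ hμ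
  -- intermediate value theorem
  have hsub : Set.Icc (0:ℝ) M ⊆ Set.Ici 0 := fun x hx => hx.1
  have hmem : (0:ℝ) ∈ Set.Icc (h 0) (h M) := ⟨hh0.le, by linarith⟩
  obtain ⟨μ, hμIcc, hμ0⟩ := intermediate_value_Icc hM0.le (hcont.mono hsub) hmem
  have hμpos : 0 < μ := by
    rcases lt_or_eq_of_le hμIcc.1 with hlt | heq
    · exact hlt
    · exfalso; rw [← heq] at hμ0; linarith
  refine ⟨μ, ⟨hμpos, hμ0⟩, ?_⟩
  intro y ⟨hy, hy0⟩
  exact hmono.injOn (Set.mem_Ici.mpr (le_of_lt hy)) (Set.mem_Ici.mpr hμpos.le)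
    (by rw [hy0, hμ0])
end

section
/- Let g(x) = Σ_{k=0}^K p_k x^k be a polynomial probability generating function with g''(1) > 0, let T ∈ (0,1], and M ∈ [0,1), and suppose T(1−M) g''(1)/g'(1) > 1. Then the self-consistency map H(y) = g₁'(1 + (y−1)T)/g₁'(1), where g₁(x) = g(x(1−M)+M), has a fixed point y* ∈ [0,1). -/
open Finset in
/-- Supercritical case (T > T_c): the self-consistency map
H(y) = g₁'(1+(y−1)T)/g₁'(1), with g₁(x) = g(x(1−M)+M), has a fixed point in [0,1). -/
theorem stmt_7 (K : ℕ) (p : ℕ → ℝ) (hp : ∀ k, 0 ≤ p k)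
    (hsum : ∑ k ∈ Finset.range (K + 1), p k = 1)
    (g : ℝ → ℝ) (hg : ∀ x, g x = ∑ k ∈ Finset.range (K + 1), p k * x ^ k)
    (hg'' : 0 < deriv (deriv g) 1) (hg' : 0 < deriv g 1)
    (T M : ℝ) (hT0 : 0 < T) (hT1 : T ≤ 1) (hM0 : 0 ≤ M) (hM1 : M < 1)
    (hsuper : 1 < T * (1 - M) * deriv (deriv g) 1 / deriv g 1)
    (g₁ : ℝ → ℝ) (hg₁ : ∀ x, g₁ x = g (x * (1 - M) + M))
    (H : ℝ → ℝ) (hH : ∀ y, H y = deriv g₁ (1 + (y - 1) * T) / deriv g₁ 1) :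
    ∃ ystar ∈ Set.Ico (0 : ℝ) 1, H ystar = ystar := by
  -- first derivative of g
  set D1 : ℝ → ℝ := fun x => ∑ k ∈ Finset.range (K + 1), p k * (k * x ^ (k - 1)) with hD1
  have hgD : ∀ x : ℝ, HasDerivAt g (D1 x) x := by
    intro x
    have : HasDerivAt (fun x : ℝ => ∑ k ∈ Finset.range (K + 1), p k * x ^ k) (D1 x) x :=
      HasDerivAt.fun_sum fun k _ => (hasDerivAt_pow k x).const_mul (p k)
    rwa [show (fun x : ℝ => ∑ k ∈ Finset.range (K + 1), p k * x ^ k) = g from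
      (funext hg).symm] at this
  have hderivg : deriv g = D1 := funext fun x => (hgD x).deriv
  have hD1nonneg : ∀ z : ℝ, 0 ≤ z → 0 ≤ D1 z := by
    intro z hz
    apply Finset.sum_nonneg
    intro k _
    exact mul_nonneg (hp k) (mul_nonneg (Nat.cast_nonneg k) (pow_nonneg hz _))
  -- differentiability of deriv g at any point
  have hD1diff : ∀ x : ℝ, HasDerivAt (deriv g)
      (∑ k ∈ Finset.range (K + 1), p k * (↑k * (↑(k - 1) * x ^ (k - 1 - 1)))) x := by
    intro x
    rw [hderivg]
    exact HasDerivAt.fun_sum fun k _ =>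
      ((hasDerivAt_pow (k - 1) x).const_mul (k : ℝ)).const_mul (p k)
  have hg2 : HasDerivAt (deriv g) (deriv (deriv g) 1) 1 := by
    have h := hD1diff 1
    rw [h.deriv]
    exact h
  -- derivative of g at any point as HasDerivAt
  have hgD' : ∀ z : ℝ, HasDerivAt g (deriv g z) z := by
    intro z; rw [hderivg]; exact hgD z
  -- the affine map
  have hφ : ∀ x : ℝ, HasDerivAt (fun x : ℝ => x * (1 - M) + M) (1 - M) x := by
    intro x
    simpa using ((hasDerivAt_id x).mul_const (1 - M)).add_const M
  have hφ1 : (1 : ℝ) * (1 - M) + M = 1 := by ring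
  -- derivative of g₁
  have hg₁D : ∀ x : ℝ, HasDerivAt g₁ (deriv g (x * (1 - M) + M) * (1 - M)) x := by
    intro x
    have := (hgD' (x * (1 - M) + M)).comp x (hφ x)
    rwa [show ((fun z => g z) ∘ fun x : ℝ => x * (1 - M) + M) = g₁ from
      (funext fun x => (hg₁ x).symm)] at this
  have hderivg₁ : deriv g₁ = fun x => deriv g (x * (1 - M) + M) * (1 - M) :=
    funext fun x => (hg₁D x).deriv
  have hM1' : (0 : ℝ) < 1 - M := by linarith
  have hdg₁1 : deriv g₁ 1 = deriv g 1 * (1 - M) := by rw [hderivg₁]; simp [hφ1]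
  have hdg₁1pos : 0 < deriv g₁ 1 := by rw [hdg₁1]; positivity
  -- second derivative of g₁ at 1
  have hg₁2 : HasDerivAt (deriv g₁) (deriv (deriv g) 1 * (1 - M) * (1 - M)) 1 := by
    rw [hderivg₁]
    have h0 : HasDerivAt (deriv g) (deriv (deriv g) 1) ((1 : ℝ) * (1 - M) + M) := by
      rw [hφ1]; exact hg2
    exact (h0.comp 1 (hφ 1)).mul_const (1 - M)
  -- derivative of H at 1
  have hψ : ∀ y : ℝ, HasDerivAt (fun y : ℝ => 1 + (y - 1) * T) T y := by
    intro y
    simpa using (((hasDerivAt_id y).sub_const 1).mul_const T).const_add 1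
  have hψ1 : (1 : ℝ) + (1 - 1) * T = 1 := by ring
  have hHD : HasDerivAt H (deriv (deriv g) 1 * (1 - M) * (1 - M) * T / deriv g₁ 1) 1 := by
    have h1 : HasDerivAt (deriv g₁) (deriv (deriv g) 1 * (1 - M) * (1 - M))
        ((1 : ℝ) + (1 - 1) * T) := by rw [hψ1]; exact hg₁2
    have hcomp : HasDerivAt (fun y : ℝ => deriv g₁ (1 + (y - 1) * T))
        (deriv (deriv g) 1 * (1 - M) * (1 - M) * T) 1 := by have := h1.comp 1 (hψ 1); exact this
    have := hcomp.div_const (deriv g₁ 1)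
    rwa [show (fun y => deriv g₁ (1 + (y - 1) * T) / deriv g₁ 1) = H from
      (funext fun y => (hH y).symm)] at this
  have hH1 : H 1 = 1 := by
    rw [hH, hψ1, div_self (ne_of_gt hdg₁1pos)]
  -- the derivative at 1 exceeds 1
  have hc : 1 < deriv (deriv g) 1 * (1 - M) * (1 - M) * T / deriv g₁ 1 := by
    rw [hdg₁1]
    rw [lt_div_iff₀ hg'] at hsuper
    rw [lt_div_iff₀ (by positivity)]
    nlinarith
  -- find y₀ ∈ (0,1) with H y₀ < y₀
  have hslope : Filter.Tendsto (slope H 1) (nhdsWithin 1 (Set.Iio 1))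
      (nhds (deriv (deriv g) 1 * (1 - M) * (1 - M) * T / deriv g₁ 1)) :=
    ((hasDerivAt_iff_tendsto_slope.mp hHD).mono_left
      (nhdsWithin_mono _ (fun x hx => ne_of_lt hx)))
  have hev1 : ∀ᶠ y in nhdsWithin 1 (Set.Iio 1), 1 < slope H 1 y :=
    hslope.eventually (eventually_gt_nhds hc)
  have hev2 : ∀ᶠ y in nhdsWithin 1 (Set.Iio 1), y ∈ Set.Ioo (0:ℝ) 1 :=
    Filter.eventually_of_mem (Ioo_mem_nhdsLT_of_mem (by constructor <;> norm_num)) fun y hy => hy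
  obtain ⟨y₀, hsy, hy₀⟩ := (hev1.and hev2).exists
  have hy₀0 : 0 < y₀ := hy₀.1
  have hy₀1 : y₀ < 1 := hy₀.2
  have hHy₀ : H y₀ < y₀ := by
    rw [slope_def_field, hH1] at hsy
    have hne : y₀ - 1 < 0 := by linarith
    have := (mul_lt_mul_right_of_neg hne).mpr hsy
    rw [div_mul_cancel₀ _ (ne_of_lt hne)] at this
    linarith
  -- H 0 ≥ 0
  have hH0 : 0 ≤ H 0 := by
    rw [hH]
    apply div_nonneg _ (le_of_lt hdg₁1pos)
    rw [hderivg₁]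
    apply mul_nonneg _ (le_of_lt hM1')
    rw [hderivg]
    exact hD1nonneg _ (by nlinarith)
  -- continuity of H
  have hHcont : Continuous H := by
    have : H = fun y => (∑ k ∈ Finset.range (K + 1),
        p k * (↑k * ((1 + (y - 1) * T) * (1 - M) + M) ^ (k - 1))) * (1 - M) / deriv g₁ 1 := by
      funext y
      rw [hH, hderivg₁]
      rw [hderivg]
    rw [this]
    apply Continuous.div_const
    apply Continuous.mul _ continuous_const
    apply continuous_finset_sum
    intro k _
    fun_prop
  -- IVT
  have hf : ContinuousOn (fun y => H y - y) (Set.Icc 0 y₀) :=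
    (hHcont.sub continuous_id).continuousOn
  have hmem : (0 : ℝ) ∈ Set.Icc (H y₀ - y₀) (H 0 - 0) := by
    constructor <;> simp <;> linarith
  obtain ⟨x, hx, hfx⟩ := intermediate_value_Icc' (le_of_lt hy₀0) hf hmem
  exact ⟨x, ⟨hx.1, lt_of_le_of_lt hx.2 hy₀1⟩, by simpa [sub_eq_zero] using hfx⟩
end

section
/- Let θ ∈ (0,1) and c ∈ (0,1], α₁, α₂ > 0, and f(μ) = μ^b with b ≥ 2. For each integer k ≥ 1 let μ*(k) be the unique minimizer of E_k(μ) = α₁ μ^b + α₂ c (k + μθ^{k+μ})/(k+μ) over μ ≥ 0. Then μ*(k) > 0 for every k. -/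
/-- With polynomial vaccine-phobia penalty f(μ) = μ^b, b ≥ 2, any minimizer over
[0,∞) of E_k(μ) = α₁ μ^b + α₂ c (k + μθ^{k+μ})/(k+μ) is strictly positive. -/
theorem stmt_16 (θ : ℝ) (hθ0 : 0 < θ) (hθ1 : θ < 1)
    (c : ℝ) (hc0 : 0 < c) (hc1 : c ≤ 1)
    (α₁ α₂ : ℝ) (hα₁ : 0 < α₁) (hα₂ : 0 < α₂)
    (b : ℝ) (hb : 2 ≤ b)
    (E : ℕ → ℝ → ℝ)
    (hE : ∀ (k : ℕ) (μ : ℝ), E k μ =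
      α₁ * μ ^ b + α₂ * c * (((k : ℝ) + μ * θ ^ ((k : ℝ) + μ)) / ((k : ℝ) + μ))) :
    ∀ k : ℕ, 1 ≤ k → ∀ μstar : ℝ, μstar ∈ Set.Ici (0 : ℝ) →
      IsMinOn (E k) (Set.Ici 0) μstar → 0 < μstar := by
  intro k hk μstar hmem hmin
  by_contra hpos
  push_neg at hpos
  have hμ0 : μstar = 0 := le_antisymm hpos hmem
  set K : ℝ := (k : ℝ) with hKdef
  have hK1 : (1:ℝ) ≤ K := by rw [hKdef]; exact_mod_cast hk
  have hK0 : (0:ℝ) < K := lt_of_lt_of_le one_pos hK1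
  have hθk : θ ^ K < 1 := Real.rpow_lt_one hθ0.le hθ1 (by linarith)
  set D : ℝ := 1 - θ ^ K with hDdef
  have hD : 0 < D := by simp only [hDdef]; linarith
  set C : ℝ := α₂ * c * D / (K + 1) with hCdef
  have hCpos : 0 < C := div_pos (mul_pos (mul_pos hα₂ hc0) hD) (by linarith)
  set μ : ℝ := min 1 (C / (2 * α₁)) with hμdef
  have hμpos : 0 < μ := lt_min one_pos (div_pos hCpos (by linarith))
  have hμ1 : μ ≤ 1 := min_le_left _ _
  have hμC : μ ≤ C / (2 * α₁) := min_le_right _ _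
  -- value at 0
  have h0 : E k 0 = α₂ * c := by
    rw [hE, Real.zero_rpow (by linarith : b ≠ 0)]
    field_simp
    ring
  -- key bound at μ
  set t : ℝ := θ ^ (K + μ) with htdef
  have ht : t ≤ θ ^ K := Real.rpow_le_rpow_of_exponent_ge hθ0 hθ1.le (by linarith)
  have ht' : t ≤ 1 - D := by simp only [hDdef]; linarith
  have ht0 : 0 ≤ t := Real.rpow_nonneg hθ0.le _
  have hden : (0:ℝ) < K + μ := by linarith
  have frac : (K + μ * t) / (K + μ) ≤ 1 - μ * D / (K + 1) := by
    have hrw : 1 - μ * D / (K + 1) = ((K + 1) - μ * D) / (K + 1) := by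
      field_simp
    rw [hrw, div_le_div_iff₀ hden (by linarith : (0:ℝ) < K + 1)]
    nlinarith [mul_pos hμpos hD, mul_le_mul_of_nonneg_left ht' (le_of_lt hμpos),
      mul_nonneg (mul_nonneg hμpos.le hD.le) (sub_nonneg.mpr hμ1)]
  have hrpow2 : μ ^ b ≤ μ ^ (2:ℝ) := Real.rpow_le_rpow_of_exponent_ge hμpos hμ1 hb
  have h2 : μ ^ (2:ℝ) = μ * μ := by
    rw [show (2:ℝ) = ((2:ℕ):ℝ) by norm_num, Real.rpow_natCast]; ring
  have hterm1 : α₁ * μ ^ b ≤ C * μ / 2 := by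
    have h1 : α₁ * μ ^ b ≤ α₁ * (μ * μ) := by
      rw [← h2]; exact mul_le_mul_of_nonneg_left hrpow2 hα₁.le
    have h2' : α₁ * (μ * μ) ≤ C * μ / 2 := by
      have := mul_le_mul_of_nonneg_left hμC (mul_pos hα₁ hμpos).le
      calc α₁ * (μ * μ) = α₁ * μ * μ := by ring
        _ ≤ α₁ * μ * (C / (2 * α₁)) := mul_le_mul_of_nonneg_left hμC (mul_pos hα₁ hμpos).le
        _ = C * μ / 2 := by field_simp
    linarith
  have hterm2 : α₂ * c * ((K + μ * t) / (K + μ)) ≤ α₂ * c - C * μ := by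
    have := mul_le_mul_of_nonneg_left frac (mul_pos hα₂ hc0).le
    have heq : α₂ * c * (1 - μ * D / (K + 1)) = α₂ * c - C * μ := by
      simp only [hCdef]; field_simp
    linarith [heq ▸ this]
  have hEμ : E k μ ≤ α₂ * c - C * μ / 2 := by
    rw [hE]
    calc α₁ * μ ^ b + α₂ * c * ((K + μ * t) / (K + μ))
        ≤ C * μ / 2 + (α₂ * c - C * μ) := add_le_add hterm1 hterm2
      _ = α₂ * c - C * μ / 2 := by ring
  have hmin' : E k μstar ≤ E k μ := hmin (Set.mem_Ici.mpr hμpos.le)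
  rw [hμ0, h0] at hmin'
  nlinarith [mul_pos hCpos hμpos]
end
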